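/- arXiv:2504.17831 — 2 statements merged into one kernel-verified Lean document; each statement's English description precedes it below -/
import Mathlib

section
/- Let 𝒞 be a treeset on a set X, and for x ∈ X define ρ(x) = {C ∈ 𝒞 : x ∈ C}. Then (i) ρ(x) ∈ V_𝒞 for every x ∈ X, and (ii) for all x, y ∈ X, the path-metric distance in (V_𝒞, T_𝒞) satisfies d_{T_𝒞}(ρ(x), ρ(y)) = |{C ∈ 𝒞 : x ∈ C, y ∉ C}|. -/
open Set

/-- A family of sets is *nested* if for any two members, one of the four
intersections of the sets or their complements is empty. -/
def Nested {X : Type*} (𝒞 : Set (Set X)) : Prop :=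
  ∀ C ∈ 𝒞, ∀ D ∈ 𝒞, C ∩ D = ∅ ∨ C ∩ Dᶜ = ∅ ∨ Cᶜ ∩ D = ∅ ∨ Cᶜ ∩ Dᶜ = ∅

/-- A *treeset* on `X`: a family of nonempty proper subsets of `X` that is nested,
closed under complementation and finitely separating. -/
def Treeset {X : Type*} (𝒞 : Set (Set X)) : Prop :=
  (∀ C ∈ 𝒞, C.Nonempty ∧ C ≠ Set.univ) ∧
  Nested 𝒞 ∧
  (∀ C ∈ 𝒞, Cᶜ ∈ 𝒞) ∧
  (∀ x y : X, {C | C ∈ 𝒞 ∧ x ∈ C ∧ y ∉ C}.Finite)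

/-- The vertices `V_𝒞` of the structure tree: subsets `u ⊆ 𝒞` satisfying (U1)–(U3). -/
def IsVertex {X : Type*} (𝒞 : Set (Set X)) (u : Set (Set X)) : Prop :=
  u ⊆ 𝒞 ∧
  (∀ C ∈ 𝒞, Xor' (C ∈ u) (Cᶜ ∈ u)) ∧
  (∀ C ∈ u, ∀ D ∈ 𝒞, C ⊆ D → D ∈ u) ∧
  ¬ ∃ f : ℕ → Set X, (∀ n, f n ∈ u) ∧ ∀ n, f (n + 1) ⊂ f n

/-- A *walk* of length `n` in the (directed presentation of the) edge set `E`. -/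
def IsWalk {α : Type*} (E : Set (α × α)) (f : ℕ → α) (n : ℕ) : Prop :=
  ∀ i < n, (f i, f (i + 1)) ∈ E

/-- Two points are joined by an `E`-path. -/
def Reach {α : Type*} (E : Set (α × α)) (x y : α) : Prop :=
  ∃ (n : ℕ) (f : ℕ → α), f 0 = x ∧ f n = y ∧ IsWalk E f n

/-- The extended path metric `d_E` of a graph, with values in `ℕ∞` (`∞` if no path exists). -/
noncomputable def graphDist {α : Type*} (E : Set (α × α)) (x y : α) : ℕ∞ :=
  sInf {d : ℕ∞ | ∃ (n : ℕ) (f : ℕ → α), d = (n : ℕ∞) ∧ f 0 = x ∧ f n = y ∧ IsWalk E f n}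

/-- A graph is *acyclic* if it has no injective cycle (of length at least 3,
i.e. not doubling back along a single edge). -/
def Acyclic {α : Type*} (E : Set (α × α)) : Prop :=
  ¬ ∃ (f : ℕ → α) (n : ℕ), 3 ≤ n ∧ IsWalk E f n ∧ f n = f 0 ∧
      ∀ i j, i < n → j < n → f i = f j → i = j

/-- The edge set `T_𝒞` of the structure tree on `V_𝒞`. -/
def TEdges {X : Type*} (𝒞 : Set (Set X)) : Set (Set (Set X) × Set (Set X)) :=
  {p | IsVertex 𝒞 p.1 ∧ IsVertex 𝒞 p.2 ∧ ∃ C, p.1 \ p.2 = {C}}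
section aux
variable {X : Type*} {𝒞 : Set (Set X)}

lemma rho_vertex (h𝒞 : Treeset 𝒞) (x : X) : IsVertex 𝒞 {C | C ∈ 𝒞 ∧ x ∈ C} := by
  obtain ⟨hne, -, hcompl, hsep⟩ := h𝒞
  refine ⟨fun C hC => hC.1, ?_, ?_, ?_⟩
  · intro C hC
    by_cases hx : x ∈ C
    · exact Or.inl ⟨⟨hC, hx⟩, fun h => h.2 hx⟩
    · exact Or.inr ⟨⟨hcompl C hC, hx⟩, fun h => hx h.2⟩
  · rintro C ⟨-, hxC⟩ D hD hCD
    exact ⟨hD, hCD hxC⟩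
  · rintro ⟨f, hf, hdec⟩
    have hanti : StrictAnti f := strictAnti_nat_of_succ_lt fun n => hdec n
    obtain ⟨z, hz0, hz1⟩ := exists_of_ssubset (hdec 0)
    refine (hsep x z).not_infinite (Set.infinite_of_injective_forall_mem
      (f := fun n : ℕ => f (n + 1)) (fun a b hab => by
        simpa using hanti.injective hab) ?_)
    intro n
    refine ⟨(hf (n+1)).1, (hf (n+1)).2, fun hzC => hz1 ?_⟩
    exact (hanti.antitone (by omega : 1 ≤ n + 1)) hzC

lemma flip_vertex (h𝒞 : Treeset 𝒞) {u : Set (Set X)} (hu : IsVertex 𝒞 u)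
    {C : Set X} (hCu : C ∈ u) (hmin : ∀ D ∈ u, D ⊆ C → D = C) :
    IsVertex 𝒞 ((u \ {C}) ∪ {Cᶜ}) ∧ (u, (u \ {C}) ∪ {Cᶜ}) ∈ TEdges 𝒞 := by
  obtain ⟨hne, -, hcompl, hsep⟩ := h𝒞
  obtain ⟨hu𝒞, hu1, hu2, hu3⟩ := hu
  have hC𝒞 : C ∈ 𝒞 := hu𝒞 hCu
  have hCne : C.Nonempty := (hne C hC𝒞).1
  have hCproper : C ≠ univ := (hne C hC𝒞).2
  have hCcne : Cᶜ.Nonempty := by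
    rw [nonempty_compl]; exact hCproper
  have hCC : C ≠ Cᶜ := by
    obtain ⟨z, hz⟩ := hCne
    intro h
    have hz2 : z ∈ Cᶜ := by rw [← h]; exact hz
    exact hz2 hz
  have hCcnu : Cᶜ ∉ u := by
    intro h
    rcases hu1 C hC𝒞 with ⟨-, h2⟩ | ⟨-, h2⟩
    · exact h2 h
    · exact h2 hCu
  have hV : IsVertex 𝒞 ((u \ {C}) ∪ {Cᶜ}) := by
    refine ⟨?_, ?_, ?_, ?_⟩
    · rintro D (⟨hD, -⟩ | hD)
      · exact hu𝒞 hD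
      · rw [mem_singleton_iff] at hD; rw [hD]; exact hcompl C hC𝒞
    · intro D hD𝒞
      by_cases h1 : D = C
      · subst h1
        refine Or.inr ⟨Or.inr rfl, ?_⟩
        rintro (⟨-, hDC⟩ | hDC)
        · exact hDC rfl
        · exact hCC (mem_singleton_iff.mp hDC)
      by_cases h2 : D = Cᶜ
      · subst h2
        refine Or.inl ⟨Or.inr rfl, ?_⟩
        rw [compl_compl]
        rintro (⟨-, hDC⟩ | hDC)
        · exact hDC rfl
        · exact hCC (mem_singleton_iff.mp hDC)
      have h3 : Dᶜ ≠ C := fun h => h2 (by rw [← h, compl_compl])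
      have h4 : Dᶜ ≠ Cᶜ := fun h => h1 (compl_injective h)
      rcases hu1 D hD𝒞 with ⟨ha, hb⟩ | ⟨ha, hb⟩
      · refine Or.inl ⟨Or.inl ⟨ha, h1⟩, ?_⟩
        rintro (⟨hDc, -⟩ | hDc)
        · exact hb hDc
        · exact h4 (mem_singleton_iff.mp hDc)
      · refine Or.inr ⟨Or.inl ⟨ha, h3⟩, ?_⟩
        rintro (⟨hDc, -⟩ | hDc)
        · exact hb hDc
        · exact h2 (mem_singleton_iff.mp hDc)
    · rintro D (⟨hDu, hDC⟩ | hD) E hE𝒞 hDE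
      · rw [mem_singleton_iff] at hDC
        have hEu : E ∈ u := hu2 D hDu E hE𝒞 hDE
        refine Or.inl ⟨hEu, ?_⟩
        rw [mem_singleton_iff]
        intro hEC; subst hEC
        exact hDC (hmin D hDu hDE)
      · rw [mem_singleton_iff] at hD; subst hD
        by_cases hECc : E = Cᶜ
        · exact Or.inr (by rw [hECc]; exact rfl)
        have hEcC : Eᶜ ⊆ C := by
          rw [← compl_compl C]; exact compl_subset_compl.mpr hDE
        have hEcneC : Eᶜ ≠ C := fun h => hECc (by rw [← h, compl_compl])
        have hEu : E ∈ u := by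
          rcases hu1 E hE𝒞 with ⟨h1, -⟩ | ⟨h1, -⟩
          · exact h1
          · exact absurd (hmin Eᶜ h1 hEcC) hEcneC
        have hEneC : E ≠ C := by
          intro h; rw [h] at hDE
          have he : Cᶜ = ∅ := eq_empty_iff_forall_notMem.mpr (fun z hz => hz (hDE hz))
          exact hCproper (compl_empty_iff.mp he)
        exact Or.inl ⟨hEu, hEneC⟩
    · rintro ⟨f, hf, hdec⟩
      have hanti : StrictAnti f := strictAnti_nat_of_succ_lt fun n => hdec n
      by_cases hk : ∃ k, f k = Cᶜ
      · obtain ⟨k, hkC⟩ := hk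
        refine hu3 ⟨fun n => f (n + k + 1), fun n => ?_, fun n => by
          show f (n + 1 + k + 1) ⊂ f (n + k + 1)
          rw [show n + 1 + k + 1 = (n + k + 1) + 1 from by omega]; exact hdec _⟩
        have hlt : f (n + k + 1) < f k := hanti (by omega)
        rcases hf (n + k + 1) with ⟨h1, -⟩ | h1
        · exact h1
        · rw [mem_singleton_iff] at h1
          rw [h1, hkC] at hlt
          exact absurd rfl hlt.ne
      · push_neg at hk
        refine hu3 ⟨f, fun n => ?_, hdec⟩
        rcases hf n with ⟨h1, -⟩ | h1
        · exact h1
        · exact absurd (mem_singleton_iff.mp h1) (hk n)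
  refine ⟨hV, ⟨hu𝒞, hu1, hu2, hu3⟩, hV, C, ?_⟩
  ext D
  simp only [mem_diff, mem_union, mem_singleton_iff, not_or, not_and, not_not]
  constructor
  · rintro ⟨hDu, h1, -⟩
    by_contra h
    exact h (h1 hDu)
  · rintro rfl
    exact ⟨hCu, fun _ => rfl, fun h => absurd h hCC⟩

lemma walk_lower :
    ∀ (n : ℕ) (f : ℕ → Set (Set X)), IsWalk (TEdges 𝒞) f n → (f 0 \ f n).encard ≤ n := by
  intro n
  induction n with
  | zero => intro f _; simp
  | succ n ih =>
    intro f hw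
    obtain ⟨-, -, C, hC⟩ := hw 0 (by omega)
    have hsub : f 0 \ f (n+1) ⊆ (f 1 \ f (n+1)) ∪ {C} := by
      rintro D ⟨hD0, hDn⟩
      by_cases h : D ∈ f 1
      · exact Or.inl ⟨h, hDn⟩
      · exact Or.inr (by rw [← hC]; exact ⟨hD0, h⟩)
    have hih : (f 1 \ f (n+1)).encard ≤ n :=
      ih (fun i => f (i+1)) (fun i hi => hw (i+1) (by omega))
    calc (f 0 \ f (n+1)).encard ≤ ((f 1 \ f (n+1)) ∪ {C}).encard := encard_mono hsub
      _ ≤ (f 1 \ f (n+1)).encard + ({C} : Set (Set X)).encard := encard_union_le _ _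
      _ ≤ (n : ℕ∞) + 1 := by rw [encard_singleton]; exact add_le_add hih le_rfl
      _ = ((n + 1 : ℕ) : ℕ∞) := by push_cast; ring

lemma walk_exists (h𝒞 : Treeset 𝒞) (y : X) :
    ∀ (n : ℕ) (u : Set (Set X)), IsVertex 𝒞 u →
      (u \ {C | C ∈ 𝒞 ∧ y ∈ C}).encard = n →
      ∃ f : ℕ → Set (Set X), f 0 = u ∧ f n = {C | C ∈ 𝒞 ∧ y ∈ C} ∧ IsWalk (TEdges 𝒞) f n := by
  set ρy := {C | C ∈ 𝒞 ∧ y ∈ C} with hρ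
  intro n
  induction n with
  | zero =>
    intro u hu h0
    have hsub : u ⊆ ρy := diff_eq_empty.mp (encard_eq_zero.mp h0)
    have huρ : u = ρy := by
      apply Subset.antisymm hsub
      intro D hD
      rcases hu.2.1 D hD.1 with ⟨h1, -⟩ | ⟨h1, -⟩
      · exact h1
      · exact absurd hD.2 (hsub h1).2
    exact ⟨fun _ => u, rfl, by rw [huρ], fun i hi => absurd hi (by omega)⟩
  | succ n ih =>
    intro u hu hcard
    have hfin : (u \ ρy).Finite := finite_of_encard_eq_coe hcard
    have hnonempty : (u \ ρy).Nonempty := by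
      rw [nonempty_iff_ne_empty]
      intro h
      rw [h, encard_empty] at hcard
      exact absurd hcard.symm (by exact_mod_cast Nat.succ_ne_zero n)
    obtain ⟨C, hCmem, hCmin⟩ : ∃ C ∈ u \ ρy, ∀ D ∈ u \ ρy, id D ≤ id C → id C = id D := by
      obtain ⟨C, hC⟩ := hfin.exists_minimal hnonempty
      exact ⟨C, hC.1, fun D hD h => le_antisymm (hC.2 hD h) h⟩
    have hCu : C ∈ u := hCmem.1
    have hC𝒞 : C ∈ 𝒞 := hu.1 hCu
    have hyC : y ∉ C := fun hy => hCmem.2 ⟨hC𝒞, hy⟩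
    have hmin : ∀ D ∈ u, D ⊆ C → D = C := by
      intro D hDu hDC
      by_cases hD : D ∈ ρy
      · exact absurd (hDC hD.2) hyC
      · exact (hCmin D ⟨hDu, hD⟩ hDC).symm
    obtain ⟨hV, hedge⟩ := flip_vertex h𝒞 hu hCu hmin
    set v := (u \ {C}) ∪ {Cᶜ} with hv
    have hCcρ : Cᶜ ∈ ρy := ⟨h𝒞.2.2.1 C hC𝒞, hyC⟩
    have hvdiff : v \ ρy = (u \ ρy) \ {C} := by
      ext D
      simp only [hv, mem_diff, mem_union, mem_singleton_iff]
      constructor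
      · rintro ⟨(⟨h1, h2⟩ | h1), h3⟩
        · exact ⟨⟨h1, h3⟩, h2⟩
        · exact absurd (h1 ▸ hCcρ) h3
      · rintro ⟨⟨h1, h2⟩, h3⟩
        exact ⟨Or.inl ⟨h1, h3⟩, h2⟩
    have hvcard : (v \ ρy).encard = n := by
      have h1 := encard_diff_singleton_add_one hCmem
      rw [hcard] at h1
      rw [hvdiff]
      have h2 : ((u \ ρy) \ {C}).encard + 1 = (n : ℕ∞) + 1 := by
        rw [h1]; push_cast; ring
      exact WithTop.add_right_cancel (by exact ENat.one_ne_top) h2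
    obtain ⟨g, hg0, hgn, hgw⟩ := ih v hV hvcard
    refine ⟨fun i => if i = 0 then u else g (i - 1), by simp, by simp [hgn], ?_⟩
    intro i hi
    rcases Nat.eq_zero_or_pos i with rfl | hpos
    · simp only [if_pos rfl, if_neg one_ne_zero]
      show (u, g (1 - 1)) ∈ TEdges 𝒞
      rw [show (1:ℕ) - 1 = 0 from rfl, hg0]
      exact hedge
    · have h1 : i ≠ 0 := by omega
      have h2 : i + 1 ≠ 0 := by omega
      simp only [if_neg h1, if_neg h2]
      rw [show i + 1 - 1 = (i - 1) + 1 from by omega]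
      exact hgw (i-1) (by omega)

end aux

/-- For `x ∈ X` let `ρ(x) = {C ∈ 𝒞 : x ∈ C}`. Then `ρ(x) ∈ V_𝒞`, and
`d_{T_𝒞}(ρ(x), ρ(y)) = |{C ∈ 𝒞 : x ∈ C, y ∉ C}|`. -/
theorem rho_isVertex_and_dist {X : Type*} (𝒞 : Set (Set X)) (h𝒞 : Treeset 𝒞) (x y : X) :
    IsVertex 𝒞 {C | C ∈ 𝒞 ∧ x ∈ C} ∧
    graphDist (TEdges 𝒞) {C | C ∈ 𝒞 ∧ x ∈ C} {C | C ∈ 𝒞 ∧ y ∈ C}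
      = {C | C ∈ 𝒞 ∧ x ∈ C ∧ y ∉ C}.encard := by
  have hvx := rho_vertex h𝒞 x
  have hdiff : {C | C ∈ 𝒞 ∧ x ∈ C} \ {C | C ∈ 𝒞 ∧ y ∈ C} = {C | C ∈ 𝒞 ∧ x ∈ C ∧ y ∉ C} := by
    ext C
    simp only [mem_diff, mem_setOf_eq]
    tauto
  have hSfin : {C | C ∈ 𝒞 ∧ x ∈ C ∧ y ∉ C}.Finite := h𝒞.2.2.2 x y
  obtain ⟨n, hn⟩ := hSfin.exists_encard_eq_coe
  refine ⟨hvx, ?_⟩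
  rw [hn]
  apply le_antisymm
  · obtain ⟨f, hf0, hfn, hfw⟩ := walk_exists h𝒞 y n _ hvx (by rw [hdiff, hn])
    exact sInf_le ⟨n, f, rfl, hf0, hfn, hfw⟩
  · apply le_sInf
    rintro d ⟨m, f, rfl, hf0, hfm, hw⟩
    have hl := walk_lower m f hw
    rw [hf0, hfm, hdiff, hn] at hl
    exact_mod_cast hl
end

section
/- Let (X,G) be a graph with uniformly bounded degrees and 𝒞 a cutset of G with uniformly bounded boundaries that is nested and closed under complementation. Then 𝒞 is finitely separating on each E_G-class: for every (x,y) ∈ E_G, the set {C ∈ 𝒞 : x ∈ C, y ∉ C} is finite. Consequently, for every E_G-class ω, the family 𝒞_ω = {C ∈ 𝒞 : C ⊆ ω} is a treeset on ω. -/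
open Set

/-- `E` is (the directed presentation of) a graph: symmetric and irreflexive. -/
def IsGraph {α : Type*} (E : Set (α × α)) : Prop :=
  (∀ p ∈ E, (p.2, p.1) ∈ E) ∧ ∀ x : α, (x, x) ∉ E

/-- `(α, E)` has uniformly bounded degrees. -/
def BddDeg {α : Type*} (E : Set (α × α)) : Prop :=
  ∃ d : ℕ, ∀ x : α, {y | (x, y) ∈ E}.encard ≤ (d : ℕ∞)

/-- The `E_G`-class (connected component) of `x`. -/
def cls {α : Type*} (E : Set (α × α)) (x : α) : Set α := {y | Reach E x y}

/-- The complement `C̄ = ω ∖ C` of `C` inside the `E_G`-class(es) of its points. -/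
def cCompl {α : Type*} (E : Set (α × α)) (C : Set α) : Set α :=
  {y | y ∉ C ∧ ∃ x ∈ C, Reach E x y}

/-- Inner vertex boundary `∂iv C` of a subset `C` of an `E_G`-class. -/
def innerB {α : Type*} (E : Set (α × α)) (C : Set α) : Set α :=
  {x | x ∈ C ∧ ∃ y, y ∉ C ∧ (x, y) ∈ E}

/-- Outer vertex boundary `∂ov C = ∂iv C̄` of a subset `C` of an `E_G`-class. -/
def outerB {α : Type*} (E : Set (α × α)) (C : Set α) : Set α :=
  {y | y ∉ C ∧ ∃ x ∈ C, (y, x) ∈ E}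

/-- Outer edge boundary `∂oe C = (C × C̄) ∩ E` of a subset `C` of an `E_G`-class. -/
def outerEdgeB {α : Type*} (E : Set (α × α)) (C : Set α) : Set (α × α) :=
  {p | p ∈ E ∧ p.1 ∈ C ∧ p.2 ∉ C}

/-- A *cut* of a graph: a nonempty proper subset of an `E_G`-class with finite
edge boundary. -/
def IsCut {α : Type*} (E : Set (α × α)) (C : Set α) : Prop :=
  (∃ x₀, x₀ ∈ C ∧ C ⊆ cls E x₀ ∧ C ≠ cls E x₀) ∧ (outerEdgeB E C).Finite

/-- `diam_E(A)`, with values in `ℕ∞`. -/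
noncomputable def gdiam {α : Type*} (E : Set (α × α)) (A : Set α) : ℕ∞ :=
  ⨆ x ∈ A, ⨆ y ∈ A, graphDist E x y

/-- `C` and `D` lie on the same `E_G`-class. -/
def SameClass {α : Type*} (E : Set (α × α)) (C D : Set α) : Prop :=
  ∃ x ∈ C, ∃ y ∈ D, Reach E x y

/-- `C` and `D` are *nested* with each other (complements taken within the class). -/
def NestedPair {α : Type*} (E : Set (α × α)) (C D : Set α) : Prop :=
  C ∩ D = ∅ ∨ C ∩ cCompl E D = ∅ ∨ cCompl E C ∩ D = ∅ ∨ cCompl E C ∩ cCompl E D = ∅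
/-- A *treeset on a set* `ω`: a family of nonempty proper subsets of `ω` that is nested,
closed under complementation within `ω`, and finitely separating. -/
def IsTreesetOn {α : Type*} (ω : Set α) (𝒟 : Set (Set α)) : Prop :=
  (∀ C ∈ 𝒟, C ⊆ ω ∧ C.Nonempty ∧ C ≠ ω) ∧
  (∀ C ∈ 𝒟, ∀ D ∈ 𝒟,
      C ∩ D = ∅ ∨ C ∩ (ω \ D) = ∅ ∨ (ω \ C) ∩ D = ∅ ∨ (ω \ C) ∩ (ω \ D) = ∅) ∧
  (∀ C ∈ 𝒟, ω \ C ∈ 𝒟) ∧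
  (∀ x ∈ ω, ∀ y ∈ ω, {C | C ∈ 𝒟 ∧ x ∈ C ∧ y ∉ C}.Finite)

section Aux

variable {α : Type*} {E : Set (α × α)}

lemma isWalk_mono {f : ℕ → α} {n m : ℕ} (h : IsWalk E f n) (hm : m ≤ n) : IsWalk E f m :=
  fun i hi => h i (lt_of_lt_of_le hi hm)

lemma reach_refl (x : α) : Reach E x x :=
  ⟨0, fun _ => x, rfl, rfl, fun i hi => absurd hi (Nat.not_lt_zero i)⟩

lemma reach_symm (hsym : ∀ p ∈ E, (p.2, p.1) ∈ E) {x y : α} (h : Reach E x y) :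
    Reach E y x := by
  obtain ⟨n, f, h0, hn, hw⟩ := h
  refine ⟨n, fun i => f (n - i), by simpa using hn, by simpa using h0, ?_⟩
  intro i hi
  have h1 : n - i = (n - (i + 1)) + 1 := by omega
  have h2 := hw (n - (i + 1)) (by omega)
  show (f (n - i), f (n - (i + 1))) ∈ E
  rw [h1]
  exact hsym _ h2

lemma reach_trans {x y z : α} (hxy : Reach E x y) (hyz : Reach E y z) : Reach E x z := by
  obtain ⟨n, f, hf0, hfn, hfw⟩ := hxy
  obtain ⟨m, g, hg0, hgm, hgw⟩ := hyz
  refine ⟨n + m, fun k => if k < n then f k else g (k - n), ?_, ?_, ?_⟩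
  · by_cases h : 0 < n
    · simpa [h] using hf0
    · have hn0 : n = 0 := by omega
      subst hn0
      have hgx : g 0 = x := by rw [hg0, ← hfn, hf0]
      simpa using hgx
  · simp [Nat.add_sub_cancel_left, hgm]
  · intro i hi
    by_cases h2 : i < n
    · by_cases h1 : i + 1 < n
      · simpa [h2, h1] using hfw i h2
      · have hn1 : i + 1 = n := by omega
        have hg : g (i + 1 - n) = f (i + 1) := by
          rw [hn1, Nat.sub_self, hg0, ← hfn]
        simp only [h2, h1, ↓reduceIte, hg]
        exact hfw i h2
    · have h1 : ¬ i + 1 < n := by omega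
      have hsub : i - n + 1 = i + 1 - n := by omega
      simpa [h2, h1, ← hsub] using hgw (i - n) (by omega)

lemma cls_eq (hsym : ∀ p ∈ E, (p.2, p.1) ∈ E) {x y : α} (h : Reach E x y) :
    cls E y = cls E x := by
  ext z
  exact ⟨fun hz => reach_trans h hz, fun hz => reach_trans (reach_symm hsym h) hz⟩

lemma dist_le_walk {x y : α} {f : ℕ → α} {n : ℕ} (h0 : f 0 = x) (hn : f n = y)
    (hw : IsWalk E f n) : graphDist E x y ≤ (n : ℕ∞) :=
  sInf_le ⟨n, f, rfl, h0, hn, hw⟩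

lemma exists_walk_of_dist_le {x y : α} {r : ℕ} (h : graphDist E x y ≤ (r : ℕ∞)) :
    ∃ n ≤ r, ∃ f : ℕ → α, f 0 = x ∧ f n = y ∧ IsWalk E f n := by
  have hne : {d : ℕ∞ | ∃ (n : ℕ) (f : ℕ → α), d = (n : ℕ∞) ∧ f 0 = x ∧ f n = y ∧
      IsWalk E f n}.Nonempty := by
    by_contra hs
    rw [Set.not_nonempty_iff_eq_empty] at hs
    unfold graphDist at h
    rw [hs, sInf_empty] at h
    exact absurd (lt_of_le_of_lt h (ENat.coe_lt_top r)) (lt_irrefl _)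
  obtain ⟨n, f, hd, h0, hn', hw⟩ := csInf_mem hne
  have hle : (n : ℕ∞) ≤ (r : ℕ∞) := hd ▸ h
  exact ⟨n, by exact_mod_cast hle, f, h0, hn', hw⟩

/-- Ball of radius `r` around `x`. -/
def gball (E : Set (α × α)) (x : α) (r : ℕ) : Set α := {y | graphDist E x y ≤ (r : ℕ∞)}

lemma nbhd_finite (hdeg : BddDeg E) (x : α) : {y | (x, y) ∈ E}.Finite := by
  obtain ⟨d, hd⟩ := hdeg
  rw [← Set.encard_lt_top_iff]
  exact lt_of_le_of_lt (hd x) (ENat.coe_lt_top d)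

lemma gball_finite (hdeg : BddDeg E) (x : α) (r : ℕ) : (gball E x r).Finite := by
  induction r with
  | zero =>
    apply Set.Finite.subset (Set.finite_singleton x)
    intro y hy
    obtain ⟨n, hn, f, h0, hn', hw⟩ := exists_walk_of_dist_le hy
    have : n = 0 := by omega
    subst this
    simp [← hn', h0]
  | succ r ih =>
    apply Set.Finite.subset (ih.union (ih.biUnion (fun a _ => nbhd_finite hdeg a)))
    intro y hy
    obtain ⟨n, hn, f, h0, hn', hw⟩ := exists_walk_of_dist_le hy
    by_cases h : n ≤ r
    · left
      exact le_trans (dist_le_walk h0 hn' hw) (by exact_mod_cast h)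
    · have hn1 : n = r + 1 := by omega
      subst hn1
      right
      refine Set.mem_biUnion (dist_le_walk h0 rfl (isWalk_mono hw (Nat.le_succ r))) ?_
      have := hw r (Nat.lt_succ_self r)
      rwa [hn'] at this

lemma exists_exit {C : Set α} {f : ℕ → α} :
    ∀ {n : ℕ}, f 0 ∈ C → f n ∉ C → ∃ i < n, f i ∈ C ∧ f (i + 1) ∉ C := by
  intro n
  induction n with
  | zero => exact fun h0 hn => absurd h0 hn
  | succ n ih =>
    intro h0 hn
    by_cases h : f n ∈ C
    · exact ⟨n, Nat.lt_succ_self n, h, hn⟩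
    · obtain ⟨i, hi, h1, h2⟩ := ih h0 h
      exact ⟨i, by omega, h1, h2⟩

lemma sync_step (hsym : ∀ p ∈ E, (p.2, p.1) ∈ E) {C D : Set α}
    (hS : outerEdgeB E C = outerEdgeB E D) {a b : α} (he : (a, b) ∈ E)
    (ha : a ∈ C ↔ a ∈ D) (hb : b ∈ C) : b ∈ D := by
  by_contra hbD
  by_cases haD : a ∈ D
  · have hmem : (a, b) ∈ outerEdgeB E D := ⟨he, haD, hbD⟩
    rw [← hS] at hmem
    exact hmem.2.2 hb
  · have haC : a ∉ C := fun h => haD (ha.mp h)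
    have hmem : (b, a) ∈ outerEdgeB E C := ⟨hsym _ he, hb, haC⟩
    rw [hS] at hmem
    exact hbD hmem.2.1

lemma sync (hsym : ∀ p ∈ E, (p.2, p.1) ∈ E) {C D : Set α}
    (hS : outerEdgeB E C = outerEdgeB E D) {f : ℕ → α} :
    ∀ {n : ℕ}, IsWalk E f n → (f 0 ∈ C ↔ f 0 ∈ D) → (f n ∈ C ↔ f n ∈ D) := by
  intro n
  induction n with
  | zero => exact fun _ h => h
  | succ n ih =>
    intro hw h0
    have hn := ih (isWalk_mono hw (Nat.le_succ n)) h0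
    have he := hw n (Nat.lt_succ_self n)
    exact ⟨fun h => sync_step hsym hS he hn h, fun h => sync_step hsym hS.symm he hn.symm h⟩

lemma dist_le_gdiam {A : Set α} {a b : α} (ha : a ∈ A) (hb : b ∈ A) :
    graphDist E a b ≤ gdiam E A :=
  le_trans (le_biSup _ hb) (le_biSup (fun x => ⨆ y ∈ A, graphDist E x y) ha)

end Aux

/-- A nested cutset with uniformly bounded boundaries, closed under
complementation, of a bounded-degree graph is finitely separating on each `E_G`-class;
consequently its restriction to each class is a treeset on that class. -/
theorem nested_cutset_is_treeset {X : Type*} (G : Set (X × X))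
    (hG : IsGraph G) (hdeg : BddDeg G)
    (𝒞 : Set (Set X)) (hcut : ∀ C ∈ 𝒞, IsCut G C)
    (r : ℕ) (hbdd : ∀ C ∈ 𝒞, gdiam G (innerB G C) ≤ (r : ℕ∞))
    (hnested : ∀ C ∈ 𝒞, ∀ D ∈ 𝒞, SameClass G C D → NestedPair G C D)
    (hcompl : ∀ C ∈ 𝒞, cCompl G C ∈ 𝒞) :
    (∀ x y : X, Reach G x y → {C | C ∈ 𝒞 ∧ x ∈ C ∧ y ∉ C}.Finite) ∧
    (∀ x : X, IsTreesetOn (cls G x) {C | C ∈ 𝒞 ∧ C ⊆ cls G x}) := by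
  -- Part 1: finite separation
  have main : ∀ x y : X, Reach G x y → {C | C ∈ 𝒞 ∧ x ∈ C ∧ y ∉ C}.Finite := by
    intro x y hxy
    obtain ⟨n, p, hp0, hpn, hpw⟩ := hxy
    set B : Set X := ⋃ i ∈ Finset.range (n + 1), gball G (p i) r with hB
    have hBfin : B.Finite :=
      Set.Finite.biUnion (Finset.finite_toSet _) (fun i _ => gball_finite hdeg _ r)
    set F : Set (X × X) := ⋃ a ∈ B, (fun b => (a, b)) '' {b | (a, b) ∈ G} with hF
    have hFfin : F.Finite := hBfin.biUnion (fun a _ => (nbhd_finite hdeg a).image _)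
    have hsub : ∀ C ∈ 𝒞, x ∈ C → y ∉ C → outerEdgeB G C ⊆ F := by
      intro C hC hx hy e he
      obtain ⟨i, hi, h1, h2⟩ := exists_exit (f := p) (hp0.symm ▸ hx) (hpn.symm ▸ hy)
      have hpi : p i ∈ innerB G C := ⟨h1, p (i + 1), h2, hpw i hi⟩
      have ha : e.1 ∈ innerB G C := ⟨he.2.1, e.2, he.2.2, by simpa using he.1⟩
      have hdist : graphDist G (p i) e.1 ≤ (r : ℕ∞) :=
        le_trans (dist_le_gdiam hpi ha) (hbdd C hC)
      have haB : e.1 ∈ B := by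
        rw [hB]
        exact Set.mem_biUnion (by simp; omega : i ∈ Finset.range (n + 1)) hdist
      rw [hF]
      refine Set.mem_biUnion haB ⟨e.2, ?_, ?_⟩
      · simpa using he.1
      · simp
    have hcls : ∀ C, C ∈ 𝒞 → x ∈ C → C ⊆ cls G x := by
      intro C hC hx
      obtain ⟨⟨x₀, hx₀, hsub', _⟩, _⟩ := hcut C hC
      have hx' : Reach G x₀ x := hsub' hx
      have : cls G x = cls G x₀ := cls_eq hG.1 hx'
      rw [this]
      exact hsub'
    have hinj : Set.InjOn (outerEdgeB G) {C | C ∈ 𝒞 ∧ x ∈ C ∧ y ∉ C} := by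
      intro C hC D hD hS
      ext z
      constructor
      · intro hz
        have hrz : Reach G x z := hcls C hC.1 hC.2.1 hz
        obtain ⟨m, f, hf0, hfm, hfw⟩ := hrz
        have h0 : f 0 ∈ C ↔ f 0 ∈ D := by
          rw [hf0]; exact ⟨fun _ => hD.2.1, fun _ => hC.2.1⟩
        have := sync hG.1 hS hfw h0
        rw [hfm] at this
        exact this.mp hz
      · intro hz
        have hrz : Reach G x z := hcls D hD.1 hD.2.1 hz
        obtain ⟨m, f, hf0, hfm, hfw⟩ := hrz
        have h0 : f 0 ∈ C ↔ f 0 ∈ D := by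
          rw [hf0]; exact ⟨fun _ => hD.2.1, fun _ => hC.2.1⟩
        have := sync hG.1 hS hfw h0
        rw [hfm] at this
        exact this.mpr hz
    apply Set.Finite.of_finite_image _ hinj
    apply Set.Finite.subset hFfin.finite_subsets
    rintro S ⟨C, hC, rfl⟩
    exact hsub C hC.1 hC.2.1 hC.2.2
  refine ⟨main, ?_⟩
  intro x
  set ω := cls G x with hω
  have hkey : ∀ C, C ∈ 𝒞 → C ⊆ ω →
      C.Nonempty ∧ C ≠ ω ∧ cCompl G C = ω \ C ∧ ∃ x₀ ∈ C, Reach G x x₀ := by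
    intro C hC hCsub
    obtain ⟨⟨x₀, hx₀, hsub', hne⟩, _⟩ := hcut C hC
    have hxx₀ : Reach G x x₀ := hCsub hx₀
    have hclseq : cls G x₀ = cls G x := cls_eq hG.1 hxx₀
    refine ⟨⟨x₀, hx₀⟩, by rw [hω, ← hclseq]; exact hne, ?_, x₀, hx₀, hxx₀⟩
    ext z
    constructor
    · rintro ⟨hz, x', hx', hr⟩
      exact ⟨reach_trans (hCsub hx') hr, hz⟩
    · rintro ⟨hz, hznC⟩
      exact ⟨hznC, x₀, hx₀, reach_trans (reach_symm hG.1 hxx₀) hz⟩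
  refine ⟨?_, ?_, ?_, ?_⟩
  · rintro C ⟨hC, hCsub⟩
    obtain ⟨h1, h2, _, _⟩ := hkey C hC hCsub
    exact ⟨hCsub, h1, h2⟩
  · rintro C ⟨hC, hCsub⟩ D ⟨hD, hDsub⟩
    obtain ⟨_, _, hCc, x₀, hx₀, hrx₀⟩ := hkey C hC hCsub
    obtain ⟨_, _, hDc, y₀, hy₀, hry₀⟩ := hkey D hD hDsub
    have hsc : SameClass G C D := ⟨x₀, hx₀, y₀, hy₀, reach_trans (reach_symm hG.1 hrx₀) hry₀⟩
    have := hnested C hC D hD hsc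
    unfold NestedPair at this
    rwa [hCc, hDc] at this
  · rintro C ⟨hC, hCsub⟩
    obtain ⟨_, _, hCc, _⟩ := hkey C hC hCsub
    constructor
    · rw [← hCc]; exact hcompl C hC
    · exact Set.diff_subset
  · intro x' hx' y' hy'
    have hr : Reach G x' y' := reach_trans (reach_symm hG.1 hx') hy'
    apply Set.Finite.subset (main x' y' hr)
    rintro C ⟨⟨hC, _⟩, h1, h2⟩
    exact ⟨hC, h1, h2⟩
end
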